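/- With φ as above, the following 'quotient invariance' holds: for any index i and any z ∈ ℤⁿ with z_i ≥ a_i, φ(z + o_i − a_i·e_i) = φ(z). Hence Algorithm repeatedly replacing z by z + o_i − a_i·e_i (for the least i with z_i ≥ a_i) returns φ(x) when started at x ∈ ℕⁿ, upon termination. -/
import Mathlib


/-- Quotient invariance of `φ`: subtracting `a_i` from coordinate `i` (when it is at
least `a_i`) and adding the overflow vector `o_i` does not change the sketch value. -/
theorem statement10 {n : ℕ} (a : Fin n → ℤ) (ha : ∀ i, 0 < a i)
    (o : Fin n → Fin n → ℤ)
    (ho_supp : ∀ i j, i ≤ j → o i j = 0)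
    (ho_range : ∀ i j, j < i → 0 ≤ o i j ∧ o i j < a j)
    (φ : (Fin n → ℤ) → (Fin n → ℤ))
    (hφ0 : φ 0 = 0)
    (hφrec : ∀ (i : Fin n) (x : Fin n → ℤ) (r : ℤ), (∀ j, i ≤ j → x j = 0) →
      φ (x + r • Pi.single i 1) =
        (r % a i) • Pi.single i 1 + φ (x + (r / a i) • o i)) :
    ∀ (i : Fin n) (z : Fin n → ℤ), a i ≤ z i →
      φ (z + o i - a i • Pi.single i 1) = φ z := by
  -- core computation: peel coordinate i itself
  have core : ∀ (i : Fin n) (x : Fin n → ℤ) (r : ℤ), (∀ j, i ≤ j → x j = 0) →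
      φ (x + r • Pi.single i 1 + o i - a i • Pi.single i 1) = φ (x + r • Pi.single i 1) := by
    intro i x r hx
    have hx' : ∀ j, i ≤ j → (x + o i) j = 0 := by
      intro j hj
      simp [hx j hj, ho_supp i j hj]
    have h1 : x + r • Pi.single i 1 + o i - a i • Pi.single i 1
        = (x + o i) + (r - a i) • Pi.single i 1 := by module
    rw [h1, hφrec i (x + o i) (r - a i) hx', hφrec i x r hx]
    have hane : a i ≠ 0 := ne_of_gt (ha i)
    have hmod : (r - a i) % a i = r % a i := by
      rw [Int.sub_emod, Int.emod_self, sub_zero, Int.emod_emod_of_dvd _ dvd_rfl]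
    have hdiv : (r - a i) / a i = r / a i - 1 := by
      have hr : r - a i = r + (-1) * a i := by ring
      rw [hr, Int.add_mul_ediv_right r (-1) hane]; ring
    rw [hmod, hdiv]
    have e : x + o i + (r / a i - 1) • o i = x + (r / a i) • o i := by module
    rw [e]
  -- case A: topmost nonzero coordinate is ≤ i
  have caseA : ∀ (i : Fin n) (z : Fin n → ℤ), (∀ j, i < j → z j = 0) →
      φ (z + o i - a i • Pi.single i 1) = φ z := by
    intro i z hz
    have hx : ∀ j, i ≤ j → (z - z i • Pi.single i 1 : Fin n → ℤ) j = 0 := by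
      intro j hj
      rcases eq_or_lt_of_le hj with h | h
      · subst h; simp
      · simp [hz j h, Pi.single_apply, (ne_of_gt h : j ≠ i)]
    have hzeq : (z - z i • Pi.single i 1) + z i • Pi.single i 1 = z := by module
    have := core i (z - z i • Pi.single i 1) (z i) hx
    rw [hzeq] at this
    exact this
  have key : ∀ k : ℕ, ∀ (i : Fin n) (z : Fin n → ℤ), (∀ j : Fin n, k ≤ (j : ℕ) → z j = 0) →
      φ (z + o i - a i • Pi.single i 1) = φ z := by
    intro k
    induction k with
    | zero =>
      intro i z hz
      exact caseA i z (fun j _ => hz j (Nat.zero_le _))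
    | succ k ih =>
      intro i z hz
      by_cases hk : (k : ℕ) ≤ (i : ℕ)
      · refine caseA i z (fun j hj => hz j ?_)
        have : (i : ℕ) < (j : ℕ) := hj
        omega
      · push_neg at hk
        by_cases hkn : k < n
        · set m : Fin n := ⟨k, hkn⟩ with hm
          have him : i < m := by
            rw [Fin.lt_def]; exact hk
          set z' : Fin n → ℤ := z - z m • Pi.single m 1 with hz'def
          have hz' : ∀ j, m ≤ j → z' j = 0 := by
            intro j hj
            rcases eq_or_lt_of_le hj with h | h
            · subst h; simp [hz'def]
            · have : (k : ℕ) + 1 ≤ (j : ℕ) := h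
              simp [hz'def, hz j this, Pi.single_apply, (ne_of_gt h : j ≠ m)]
          have hw : ∀ j, m ≤ j → (z' + o i - a i • Pi.single i 1 : Fin n → ℤ) j = 0 := by
            intro j hj
            have hij : i < j := lt_of_lt_of_le him hj
            simp [hz' j hj, ho_supp i j (le_of_lt hij), Pi.single_apply,
              (ne_of_gt hij : j ≠ i)]
          have e1 : z = z' + z m • Pi.single m 1 := by rw [hz'def]; module
          have e2 : z + o i - a i • Pi.single i 1
              = (z' + o i - a i • Pi.single i 1) + z m • Pi.single m 1 := by
            rw [hz'def]; module
          rw [e2, hφrec m (z' + o i - a i • Pi.single i 1) (z m) hw]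
          conv_rhs => rw [e1, hφrec m z' (z m) hz']
          congr 1
          have e3 : z' + o i - a i • Pi.single i 1 + (z m / a m) • o m
              = (z' + (z m / a m) • o m) + o i - a i • Pi.single i 1 := by module
          rw [e3]
          refine ih i _ (fun j hj => ?_)
          have hmj : m ≤ j := hj
          simp [hz' j hmj, ho_supp m j hmj]
        · refine ih i z (fun j hj => ?_)
          have := j.isLt
          omega
  intro i z _
  refine key n i z (fun j hj => absurd hj (Nat.not_le.mpr j.isLt))
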